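/- arXiv:1809.03309 — 6 statements merged into one kernel-verified Lean document; each statement's English description precedes it below -/
import Mathlib

section
/- Assume the TIN-convexity condition (C1). Let π be a decoding order, M ⊆ {1,…,K} nonempty, and l'_i ∈ {1,…,L_i} for each i ∈ M. For each i ∈ M let l_i be the smallest element of {1,…,L_i} such that {1,…,l'_i} ⊆ {π_i(1),…,π_i(l_i)}. Then f_π(M,(l_i)_{i∈M}) ≤ f_id(M,(l'_i)_{i∈M}). -/
open Finset

/-- The cyclically previous index in `Fin m` (i.e. `j - 1` modulo `m`). -/
def prevIdx {m : ℕ} (j : Fin m) : Fin m :=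
  ⟨(j.val + (m - 1)) % m, Nat.mod_lt _ j.pos⟩

/-- The identity decoding order. -/
def idOrder {K : ℕ} (L : Fin K → ℕ) : (k : Fin K) → Equiv.Perm (Fin (L k)) :=
  fun _ => Equiv.refl _

/-- The cyclic sum `Σ_j (α_{i_j i_j}^{[π(l_{i_j})]} − α_{i_j i_{j−1}}^{[π(l_{i_j})]})`
associated with a cyclic arrangement `c` of cells. -/
noncomputable def cycVal {K : ℕ} (L : Fin K → ℕ)
    (α : (k : Fin K) → Fin (L k) → Fin K → ℝ)
    (π : (k : Fin K) → Equiv.Perm (Fin (L k)))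
    {m : ℕ} (c : Fin m → Fin K) (lsel : (i : Fin K) → Fin (L i)) : ℝ :=
  ∑ j, (α (c j) (π (c j) (lsel (c j))) (c j) -
        α (c j) (π (c j) (lsel (c j))) (c (prevIdx j)))

/-- The set function `f_π(M, (l_i)_{i∈M})`: for a singleton `M = {i}` it is
`α_{ii}^{[π_i(l_i)]}`; for `|M| ≥ 2` it is the minimum of the cyclic sums over all
cyclic arrangements of `M`. -/
noncomputable def fOrder {K : ℕ} (L : Fin K → ℕ)
    (α : (k : Fin K) → Fin (L k) → Fin K → ℝ)
    (π : (k : Fin K) → Equiv.Perm (Fin (L k)))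
    (M : Finset (Fin K)) (lsel : (i : Fin K) → Fin (L i)) : ℝ :=
  if M.card = 1 then ∑ i ∈ M, α i (π i (lsel i)) i
  else sInf {x : ℝ | ∃ c : Fin M.card → Fin K,
    Function.Injective c ∧ (∀ j, c j ∈ M) ∧ x = cycVal L α π c lsel}

/-- **Lemma 3 (Section 5, Step 1 of the convexity proof).**
Assume (C1). Let `π` be a decoding order, `M` a nonempty set of cells and `l'` a choice
of user indices. If for each `i ∈ M`, `l i` is the smallest index such that the first
`l' i` users `{1,…,l'_i}` are contained among `{π_i(1),…,π_i(l_i)}`, then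
`f_π(M,(l_i)) ≤ f_id(M,(l'_i))`. -/
theorem fOrder_le_fOrder_id {K : ℕ} (hK : 1 ≤ K)
    (L : Fin K → ℕ) (hL : ∀ k, 1 ≤ L k)
    (α : (k : Fin K) → Fin (L k) → Fin K → ℝ)
    (hα : ∀ (k : Fin K) (l : Fin (L k)) (i : Fin K), 0 ≤ α k l i)
    (hmono : ∀ k : Fin K, Monotone (fun l : Fin (L k) => α k l k))
    (hC1 : ∀ (i j : Fin K), j ≠ i → ∀ (l' l : Fin (L i)), l' < l →
      α i l' i + α i l j - α i l' j ≤ α i l i)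
    (π : (k : Fin K) → Equiv.Perm (Fin (L k)))
    (M : Finset (Fin K)) (hM : M.Nonempty)
    (l' l : (i : Fin K) → Fin (L i))
    (hl : ∀ i ∈ M, IsLeast
      {t : Fin (L i) | Finset.Iic (l' i) ⊆ (Finset.Iic t).image (π i)} (l i)) :
    fOrder L α π M l ≤ fOrder L α (idOrder L) M l' := by

  -- Key fact: π i (l i) ≤ l' i for i ∈ M.
  have hkey : ∀ i ∈ M, π i (l i) ≤ l' i := by
    intro i hi
    by_contra hcon
    push_neg at hcon
    obtain ⟨hsub, hmin⟩ := hl i hi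
    rcases Nat.eq_zero_or_pos (l i).val with h0 | hpos
    · have hx : l' i ∈ (Finset.Iic (l i)).image (π i) :=
        hsub (Finset.mem_Iic.2 le_rfl)
      obtain ⟨y, hy, hyeq⟩ := Finset.mem_image.1 hx
      have hyli : y = l i := by
        have := Finset.mem_Iic.1 hy
        apply Fin.ext; omega
      rw [hyli] at hyeq
      exact hcon.ne' hyeq
    · set t : Fin (L i) := ⟨(l i).val - 1, lt_of_le_of_lt (by omega) (l i).isLt⟩ with ht
      have hsub' : Finset.Iic (l' i) ⊆ (Finset.Iic t).image (π i) := by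
        intro x hx
        obtain ⟨y, hy, hyeq⟩ := Finset.mem_image.1 (hsub hx)
        refine Finset.mem_image.2 ⟨y, ?_, hyeq⟩
        have hyle := Finset.mem_Iic.1 hy
        have hyne : y ≠ l i := by
          intro h
          rw [h] at hyeq
          have hxle := Finset.mem_Iic.1 hx
          exact absurd (hyeq ▸ hxle) (not_le.2 hcon)
        have : y < l i := lt_of_le_of_ne hyle hyne
        exact Finset.mem_Iic.2 (by rw [Fin.le_def]; have := Fin.lt_def.1 this; simp [ht]; omega)
      have := hmin hsub'
      have : (l i).val ≤ (l i).val - 1 := this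
      omega
  -- Per-cell inequality.
  have hterm : ∀ i ∈ M, ∀ j : Fin K,
      α i (π i (l i)) i - α i (π i (l i)) j ≤ α i (l' i) i - α i (l' i) j := by
    intro i hi j
    by_cases hji : j = i
    · subst hji
      simp only [sub_self]
      exact le_refl 0
    · rcases lt_or_eq_of_le (hkey i hi) with hlt | heq
      · have := hC1 i j hji _ _ hlt
        linarith
      · rw [heq]
  -- Cyclic sum comparison.
  have hcyc : ∀ {m : ℕ} (c : Fin m → Fin K), (∀ j, c j ∈ M) →
      cycVal L α π c l ≤ cycVal L α (idOrder L) c l' := by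
    intro m c hc
    unfold cycVal idOrder
    apply Finset.sum_le_sum
    intro j _
    simpa using hterm (c j) (hc j) (c (prevIdx j))
  unfold fOrder
  by_cases h1 : M.card = 1
  · rw [if_pos h1, if_pos h1]
    obtain ⟨i, hMi⟩ := Finset.card_eq_one.1 h1
    subst hMi
    rw [Finset.sum_singleton, Finset.sum_singleton]
    exact hmono i (hkey i (Finset.mem_singleton_self i))
  · rw [if_neg h1, if_neg h1]
    set S := {x : ℝ | ∃ c : Fin M.card → Fin K,
      Function.Injective c ∧ (∀ j, c j ∈ M) ∧ x = cycVal L α π c l} with hS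
    set T := {x : ℝ | ∃ c : Fin M.card → Fin K,
      Function.Injective c ∧ (∀ j, c j ∈ M) ∧ x = cycVal L α (idOrder L) c l'} with hT
    have hfinS : S.Finite := by
      have hsub : S ⊆ (fun c : Fin M.card → Fin K => cycVal L α π c l) '' Set.univ := by
        rintro x ⟨c, _, _, rfl⟩; exact ⟨c, trivial, rfl⟩
      exact (Set.finite_univ.image _).subset hsub
    have hfinT : T.Finite := by
      have hsub : T ⊆ (fun c : Fin M.card → Fin K => cycVal L α (idOrder L) c l') '' Set.univ := by
        rintro x ⟨c, _, _, rfl⟩; exact ⟨c, trivial, rfl⟩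
      exact (Set.finite_univ.image _).subset hsub
    have hTne : T.Nonempty := by
      refine ⟨cycVal L α (idOrder L) (fun j => ((M.orderIsoOfFin rfl) j : Fin K)) l',
        fun j => ((M.orderIsoOfFin rfl) j : Fin K), ?_, ?_, rfl⟩
      · exact Subtype.coe_injective.comp (M.orderIsoOfFin rfl).injective
      · intro j; exact ((M.orderIsoOfFin rfl) j).2
    obtain ⟨c, hcinj, hcm, hceq⟩ := hTne.csInf_mem hfinT
    calc sInf S ≤ cycVal L α π c l := csInf_le hfinS.bddBelow ⟨c, hcinj, hcm, rfl⟩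
      _ ≤ cycVal L α (idOrder L) c l' := hcyc c hcm
      _ = sInf T := hceq.symm
end

section
/- Assume the TIN-convexity condition (C1). For every nonempty M ⊆ {1,…,K} and indices l'_i ≤ l_i in {1,…,L_i} for each i ∈ M, f_id(M,(l'_i)_{i∈M}) ≤ f_id(M,(l_i)_{i∈M}); i.e., the set function f_id is monotone in the per-cell user indices. -/
open Finset

/-- **Lemma 4 (Section 5, Step 2 of the convexity proof): monotonicity of `f_id`.**
Assume (C1). For every nonempty set of cells `M` and user indices `l' i ≤ l i` for each
`i ∈ M`, one has `f_id(M,(l'_i)) ≤ f_id(M,(l_i))`. -/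
theorem fOrder_id_monotone {K : ℕ} (hK : 1 ≤ K)
    (L : Fin K → ℕ) (hL : ∀ k, 1 ≤ L k)
    (α : (k : Fin K) → Fin (L k) → Fin K → ℝ)
    (hα : ∀ (k : Fin K) (l : Fin (L k)) (i : Fin K), 0 ≤ α k l i)
    (hmono : ∀ k : Fin K, Monotone (fun l : Fin (L k) => α k l k))
    (hC1 : ∀ (i j : Fin K), j ≠ i → ∀ (l' l : Fin (L i)), l' < l →
      α i l' i + α i l j - α i l' j ≤ α i l i)
    (M : Finset (Fin K)) (hM : M.Nonempty)
    (l' l : (i : Fin K) → Fin (L i)) (hll : ∀ i ∈ M, l' i ≤ l i) :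
    fOrder L α (idOrder L) M l' ≤ fOrder L α (idOrder L) M l := by
  unfold fOrder
  by_cases h1 : M.card = 1
  · simp only [h1, if_true]
    apply Finset.sum_le_sum
    intro i hi
    exact hmono i (hll i hi)
  · simp only [h1, if_false]
    have hm2 : 2 ≤ M.card := by
      have := Finset.card_pos.mpr hM
      omega
    have key : ∀ (c : Fin M.card → Fin K), Function.Injective c → (∀ j, c j ∈ M) →
        cycVal L α (idOrder L) c l' ≤ cycVal L α (idOrder L) c l := by
      intro c hcinj hcm
      unfold cycVal
      apply Finset.sum_le_sum
      intro j _
      simp only [idOrder, Equiv.refl_apply]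
      have hne : c (prevIdx j) ≠ c j := by
        intro h
        have hj := hcinj h
        have hv : ((j.val + (M.card - 1)) % M.card) = j.val := congrArg Fin.val hj
        rcases Nat.eq_zero_or_pos j.val with h0 | h0
        · rw [h0, Nat.zero_add, Nat.mod_eq_of_lt (by omega)] at hv
          omega
        · have hrw : j.val + (M.card - 1) = (j.val - 1) + M.card := by omega
          rw [hrw, Nat.add_mod_right, Nat.mod_eq_of_lt (by omega)] at hv
          omega
      rcases lt_or_eq_of_le (hll (c j) (hcm j)) with hlt | heq
      · have := hC1 (c j) (c (prevIdx j)) hne (l' (c j)) (l (c j)) hlt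
        linarith
      · rw [heq]
    have hfin : {x : ℝ | ∃ c : Fin M.card → Fin K,
        Function.Injective c ∧ (∀ j, c j ∈ M) ∧ x = cycVal L α (idOrder L) c l'}.Finite := by
      apply Set.Finite.subset (Set.finite_range (fun c : Fin M.card → Fin K =>
        cycVal L α (idOrder L) c l'))
      rintro x ⟨c, _, _, rfl⟩
      exact ⟨c, rfl⟩
    have hbdd : BddBelow {x : ℝ | ∃ c : Fin M.card → Fin K,
        Function.Injective c ∧ (∀ j, c j ∈ M) ∧ x = cycVal L α (idOrder L) c l'} :=
      hfin.bddBelow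
    set c0 : Fin M.card → Fin K := fun j => (M.orderIsoOfFin rfl j : Fin K) with hc0
    have hc0inj : Function.Injective c0 := fun a b h =>
      (M.orderIsoOfFin rfl).injective (Subtype.ext h)
    have hc0mem : ∀ j, c0 j ∈ M := fun j => (M.orderIsoOfFin rfl j).2
    apply le_csInf
    · exact ⟨cycVal L α (idOrder L) c0 l, c0, hc0inj, hc0mem, rfl⟩
    · rintro x ⟨c, hcinj, hcm, rfl⟩
      exact le_trans (csInf_le hbdd ⟨c, hcinj, hcm, rfl⟩) (key c hcinj hcm)
end

section
/- Assume the TIN-convexity condition (C2). For every nonempty M ⊊ {1,…,K}, every k ∈ {1,…,K} \ M, and every choice of indices l_i ∈ {1,…,L_i} for i ∈ M ∪ {k}: f_id(M,(l_i)_{i∈M}) ≤ f_id(M ∪ {k},(l_i)_{i∈M∪{k}}). -/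
open Finset

lemma prevIdx_eq_add_last {n : ℕ} (j : Fin (n+1)) : prevIdx j = j + Fin.last n := by
  apply Fin.ext; simp [prevIdx, Fin.add_def, Fin.last]

lemma prevIdx_add {n : ℕ} (j d : Fin (n+1)) : prevIdx (j + d) = prevIdx j + d := by
  rw [prevIdx_eq_add_last, prevIdx_eq_add_last, add_right_comm]

lemma prevIdx_zero {m : ℕ} : prevIdx (0 : Fin (m+1)) = Fin.last m := by
  apply Fin.ext
  simp [prevIdx, Fin.last, Nat.mod_eq_of_lt]

lemma prevIdx_last {m : ℕ} (hm : 1 ≤ m) : (prevIdx (Fin.last m)).val = m - 1 := by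
  have h : m + (m + 1 - 1) = (m+1) + (m-1) := by omega
  simp only [prevIdx, Fin.last, h, Nat.add_mod_left]
  exact Nat.mod_eq_of_lt (by omega)

lemma prevIdx_castSucc {m : ℕ} (j : Fin m) (hj : j.val ≠ 0) :
    prevIdx (Fin.castSucc j) = Fin.castSucc (prevIdx j) := by
  apply Fin.ext
  have hjm := j.isLt
  have h1 : j.val + (m + 1 - 1) = (m+1) + (j.val - 1) := by omega
  have h2 : j.val + (m - 1) = m + (j.val - 1) := by omega
  simp only [prevIdx, Fin.coe_castSucc, h1, h2, Nat.add_mod_left]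
  rw [Nat.mod_eq_of_lt (by omega), Nat.mod_eq_of_lt (by omega)]

lemma cycVal_rotate {K : ℕ} (L : Fin K → ℕ)
    (α : (k : Fin K) → Fin (L k) → Fin K → ℝ)
    (π : (k : Fin K) → Equiv.Perm (Fin (L k)))
    {n : ℕ} (c : Fin (n+1) → Fin K) (lsel : (i : Fin K) → Fin (L i)) (d : Fin (n+1)) :
    cycVal L α π (fun j => c (j + d)) lsel = cycVal L α π c lsel := by
  unfold cycVal
  exact Fintype.sum_equiv (Equiv.addRight d) _ _ (by
    intro j
    simp [Equiv.coe_addRight, prevIdx_add]; rfl)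

lemma cycVal_cast {K : ℕ} (L : Fin K → ℕ)
    (α : (k : Fin K) → Fin (L k) → Fin K → ℝ)
    (π : (k : Fin K) → Equiv.Perm (Fin (L k)))
    {n m : ℕ} (h : n = m) (c : Fin m → Fin K) (lsel : (i : Fin K) → Fin (L i)) :
    cycVal L α π (fun j : Fin n => c (Fin.cast h j)) lsel = cycVal L α π c lsel := by
  subst h; rfl

lemma sum_le_aux {m : ℕ} [NeZero m] (hm : 2 ≤ m) (T : Fin (m+1) → ℝ) (S : Fin m → ℝ)
    (hstep : ∀ j : Fin m, j.val ≠ 0 → S j = T (Fin.castSucc j))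
    (h0 : S 0 ≤ T (Fin.castSucc 0) + T (Fin.last m)) :
    ∑ j, S j ≤ ∑ j, T j := by
  rw [Fin.sum_univ_castSucc]
  calc ∑ j, S j
      ≤ ∑ j : Fin m, (T (Fin.castSucc j) + if j = 0 then T (Fin.last m) else 0) := by
        apply Finset.sum_le_sum
        intro j _
        by_cases hj : j = 0
        · subst hj; simpa using h0
        · rw [if_neg hj, add_zero,
            hstep j (fun h => hj (Fin.ext (by simpa using h)))]
    _ = (∑ j : Fin m, T (Fin.castSucc j)) + T (Fin.last m) := by
        rw [Finset.sum_add_distrib, Finset.sum_ite_eq' Finset.univ (0 : Fin m)]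
        simp

lemma fOrder_le_cycVal_aux {K : ℕ} (L : Fin K → ℕ)
    (α : (k : Fin K) → Fin (L k) → Fin K → ℝ)
    (hα : ∀ (k : Fin K) (l : Fin (L k)) (i : Fin K), 0 ≤ α k l i)
    (hC2 : ∀ (i : Fin K) (li : Fin (L i)) (j : Fin K), j ≠ i →
      ∀ (k : Fin K), k ≠ i → ∀ (lk : Fin (L k)),
      α i li j + α k lk i - (if k = j then 0 else α k lk j) ≤ α i li i)
    (M : Finset (Fin K)) (k : Fin K) (hk : k ∉ M)
    (lsel : (i : Fin K) → Fin (L i)) {m : ℕ} (hm : M.card = m) (hm1 : 1 ≤ m)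
    (c2 : Fin (m+1) → Fin K)
    (hlast : c2 (Fin.last m) = k)
    (hmem2 : ∀ j, j ≠ Fin.last m → c2 j ∈ M)
    (hinj2 : Function.Injective c2) :
    fOrder L α (idOrder L) M lsel ≤ cycVal L α (idOrder L) c2 lsel := by
  by_cases hone : m = 1
  · subst hone
    obtain ⟨i0, hMi⟩ := Finset.card_eq_one.mp hm
    have hi0k : i0 ≠ k := by
      intro h; apply hk; rw [← h, hMi]; exact Finset.mem_singleton_self i0
    have h0 : c2 (Fin.castSucc 0) = i0 := by
      have := hmem2 (Fin.castSucc 0) (Fin.castSucc_lt_last 0).ne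
      rwa [hMi, Finset.mem_singleton] at this
    rw [fOrder, if_pos hm, hMi, Finset.sum_singleton]
    unfold cycVal
    rw [Fin.sum_univ_castSucc, Fin.sum_univ_one]
    have hp1 : prevIdx (Fin.castSucc (0 : Fin 1)) = Fin.last 1 := by decide
    have hp2 : prevIdx (Fin.last 1) = Fin.castSucc (0 : Fin 1) := by decide
    rw [hp1, hp2, h0, hlast]
    simp only [idOrder, Equiv.refl_apply]
    have h := hC2 k (lsel k) i0 hi0k i0 hi0k (lsel i0)
    rw [if_pos rfl] at h
    linarith
  · have hm2 : 2 ≤ m := by omega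
    haveI : NeZero m := ⟨by omega⟩
    set c' : Fin m → Fin K := fun j => c2 (Fin.castSucc j) with hc'
    have hc'inj : Function.Injective c' :=
      hinj2.comp (Fin.castSucc_injective m)
    have hc'mem : ∀ j, c' j ∈ M := fun j => hmem2 _ (Fin.castSucc_lt_last j).ne
    rw [fOrder, if_neg (by omega)]
    have hBdd : BddBelow {x : ℝ | ∃ c : Fin M.card → Fin K,
        Function.Injective c ∧ (∀ j, c j ∈ M) ∧ x = cycVal L α (idOrder L) c lsel} := by
      apply Set.Finite.bddBelow
      apply Set.Finite.subset
        (Set.finite_range (fun c : Fin M.card → Fin K => cycVal L α (idOrder L) c lsel))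
      rintro x ⟨c, _, _, rfl⟩
      exact ⟨c, rfl⟩
    have hmem' : cycVal L α (idOrder L) c' lsel ∈ {x : ℝ | ∃ c : Fin M.card → Fin K,
        Function.Injective c ∧ (∀ j, c j ∈ M) ∧ x = cycVal L α (idOrder L) c lsel} := by
      refine ⟨fun j => c' (Fin.cast hm j), ?_, fun j => hc'mem _,
        (cycVal_cast L α _ hm c' lsel).symm⟩
      exact hc'inj.comp (Fin.cast_injective hm)
    refine le_trans (csInf_le hBdd hmem') ?_
    -- now show cycVal c' ≤ cycVal c2
    unfold cycVal
    simp only [idOrder, Equiv.refl_apply]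
    apply sum_le_aux hm2
    · intro j hj
      simp only [hc']
      rw [prevIdx_castSucc j hj]
    · -- the j = 0 term
      have hplast : prevIdx (Fin.last m) = Fin.castSucc (prevIdx (0 : Fin m)) := by
        apply Fin.ext
        rw [prevIdx_last hm1]
        simp only [Fin.coe_castSucc, prevIdx, Fin.val_zero, Nat.zero_add]
        exact (Nat.mod_eq_of_lt (by omega)).symm
      have key : ∀ (A P b : Fin K), b = k → A ≠ k → P ≠ k →
          α A (lsel A) A - α A (lsel A) P ≤
          (α A (lsel A) A - α A (lsel A) k) + (α b (lsel b) b - α b (lsel b) P) := by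
        intro A P b hb hAk hPk
        subst b
        have h := hC2 k (lsel k) P hPk A hAk (lsel A)
        by_cases hip : A = P
        · rw [if_pos hip] at h
          rw [hip] at h ⊢
          linarith [hα P (lsel P) P]
        · rw [if_neg hip] at h
          linarith
      have r1 : c2 (prevIdx (Fin.castSucc (0 : Fin m))) = k := by
        have : prevIdx (Fin.castSucc (0 : Fin m)) = Fin.last m := by
          apply Fin.ext
          simp [prevIdx, Fin.last, Nat.mod_eq_of_lt]
        rw [this, hlast]
      have r2 : c2 (prevIdx (Fin.last m)) = c2 (Fin.castSucc (prevIdx (0 : Fin m))) :=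
        congrArg c2 hplast
      have hAk : c2 (Fin.castSucc (0 : Fin m)) ≠ k := by
        rw [← hlast]
        intro h
        have := congrArg Fin.val (hinj2 h)
        simp [Fin.last] at this
        omega
      have hPk : c2 (Fin.castSucc (prevIdx (0 : Fin m))) ≠ k := by
        rw [← hlast]
        intro h
        have := congrArg Fin.val (hinj2 h)
        have hv : ((prevIdx (0 : Fin m)).castSucc).val = m - 1 := by
          simp [prevIdx, Nat.mod_eq_of_lt (show m - 1 < m by omega)]
        rw [hv] at this
        simp [Fin.last] at this
        omega
      rw [r1, r2]
      exact key (c2 (Fin.castSucc (0 : Fin m))) (c2 (Fin.castSucc (prevIdx (0 : Fin m))))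
        (c2 (Fin.last m)) hlast hAk hPk

/-- **Lemma 5 (Section 5, Step 3 of the convexity proof).**
Assume (C2). For every nonempty proper set of cells `M`, every cell `k ∉ M`, and every
choice of user indices, `f_id(M,(l_i)_{i∈M}) ≤ f_id(M ∪ {k},(l_i)_{i∈M∪{k}})`. -/
theorem fOrder_id_le_insert {K : ℕ} (hK : 1 ≤ K)
    (L : Fin K → ℕ) (hL : ∀ k, 1 ≤ L k)
    (α : (k : Fin K) → Fin (L k) → Fin K → ℝ)
    (hα : ∀ (k : Fin K) (l : Fin (L k)) (i : Fin K), 0 ≤ α k l i)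
    (hmono : ∀ k : Fin K, Monotone (fun l : Fin (L k) => α k l k))
    (hC2 : ∀ (i : Fin K) (li : Fin (L i)) (j : Fin K), j ≠ i →
      ∀ (k : Fin K), k ≠ i → ∀ (lk : Fin (L k)),
      α i li j + α k lk i - (if k = j then 0 else α k lk j) ≤ α i li i)
    (M : Finset (Fin K)) (hM : M.Nonempty)
    (k : Fin K) (hk : k ∉ M)
    (lsel : (i : Fin K) → Fin (L i)) :
    fOrder L α (idOrder L) M lsel ≤ fOrder L α (idOrder L) (insert k M) lsel := by
  classical
  have hm1 : 1 ≤ M.card := Finset.card_pos.mpr hM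
  have hcard : (insert k M).card = M.card + 1 := Finset.card_insert_of_notMem hk
  conv_rhs => rw [fOrder]
  rw [if_neg (by omega)]
  apply le_csInf
  · refine ⟨cycVal L α (idOrder L)
      (fun j => ((insert k M).equivFin.symm j : Fin K)) lsel,
      fun j => ((insert k M).equivFin.symm j : Fin K), ?_, fun j =>
      ((insert k M).equivFin.symm j).2, rfl⟩
    intro a b hab
    exact (insert k M).equivFin.symm.injective (Subtype.ext hab)
  · rintro x ⟨c, hinj, hmem, rfl⟩
    set c1 : Fin (M.card + 1) → Fin K := fun j => c (Fin.cast hcard.symm j) with hc1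
    have hval1 : cycVal L α (idOrder L) c1 lsel = cycVal L α (idOrder L) c lsel :=
      cycVal_cast L α _ hcard.symm c lsel
    have hinj1 : Function.Injective c1 := hinj.comp (Fin.cast_injective _)
    have hmem1 : ∀ j, c1 j ∈ insert k M := fun j => hmem _
    obtain ⟨j0, hj0⟩ : ∃ j0, c1 j0 = k := by
      have hbij : Function.Bijective (fun j : Fin (M.card + 1) =>
          (⟨c1 j, hmem1 j⟩ : {x // x ∈ insert k M})) := by
        rw [Fintype.bijective_iff_injective_and_card]
        refine ⟨fun a b hab => hinj1 (congrArg Subtype.val hab), ?_⟩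
        rw [Fintype.card_fin, Fintype.card_coe, hcard]
      obtain ⟨j0, hj0⟩ := hbij.2 ⟨k, Finset.mem_insert_self k M⟩
      exact ⟨j0, congrArg Subtype.val hj0⟩
    set c2 : Fin (M.card + 1) → Fin K := fun j => c1 (j + (j0 + 1)) with hc2
    have hval2 : cycVal L α (idOrder L) c2 lsel = cycVal L α (idOrder L) c1 lsel :=
      cycVal_rotate L α _ c1 lsel (j0 + 1)
    have hinj2 : Function.Injective c2 := by
      intro a b hab
      have := hinj1 hab
      exact add_right_cancel this
    have hlast : c2 (Fin.last M.card) = k := by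
      show c1 (Fin.last M.card + (j0 + 1)) = k
      have heq : Fin.last M.card + (j0 + 1) = j0 := by
        rw [add_comm j0 1, ← add_assoc, Fin.last_add_one, zero_add]
      rw [heq, hj0]
    have hmem2 : ∀ j, j ≠ Fin.last M.card → c2 j ∈ M := by
      intro j hj
      rcases Finset.mem_insert.mp (hmem1 (j + (j0 + 1))) with h | h
      · exact absurd (hinj2 ((show c2 j = k from h).trans hlast.symm)) hj
      · exact h
    rw [← hval1, ← hval2]
    exact fOrder_le_cycVal_aux L α hα hC2 M k hk lsel rfl hm1 c2 hlast hmem2 hinj2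
end

section
/- Assume the TIN-convexity condition (C2). For every M ⊆ {1,…,K} and every k ∈ {1,…,K}: P_id(∪_{i∈M} K_i) ⊆ P_id(∪_{i∈M∪{k}} K_i); consequently, P_id(∪_{i∈M} K_i) ⊆ P_id(𝒦) for every M ⊆ {1,…,K}. -/
open Finset

/-- The set of users `𝒦`: a cell `k : Fin K` together with a user index in `Fin (L k)`. -/
abbrev User {K : ℕ} (L : Fin K → ℕ) := (k : Fin K) × Fin (L k)

/-- The cyclically next index in `Fin m` (i.e. `j + 1` modulo `m`). -/
def nextIdx {m : ℕ} (j : Fin m) : Fin m :=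
  ⟨(j.val + 1) % m, Nat.mod_lt _ j.pos⟩

/-- The term `max({0} ∪ {r_k^{[π_k(l')]} + α_{kk}^{[π_k(l')]} : l' < l, (π_k(l'),k) ∈ S}
∪ {r_j^{[l_j]} + α_{jk}^{[l_j]} : (l_j,j) ∈ S, j ≠ k})` in the polyhedral TIN constraints
(expressed as a supremum of the corresponding finite nonempty set of reals). -/
noncomputable def innerMax {K : ℕ} (L : Fin K → ℕ)
    (α : (k : Fin K) → Fin (L k) → Fin K → ℝ)
    (π : (k : Fin K) → Equiv.Perm (Fin (L k)))
    (S : Set (User L)) (r : (k : Fin K) → Fin (L k) → ℝ)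
    (k : Fin K) (l : Fin (L k)) : ℝ :=
  sSup (insert (0 : ℝ)
    ({x : ℝ | ∃ l' : Fin (L k), l' < l ∧ (⟨k, π k l'⟩ : User L) ∈ S ∧
        x = r k (π k l') + α k (π k l') k} ∪
     {x : ℝ | ∃ (j : Fin K) (lj : Fin (L j)), j ≠ k ∧ (⟨j, lj⟩ : User L) ∈ S ∧
        x = r j lj + α j lj k}))

/-- The polyhedral TIN region `P_π(S)`: `d` is nonnegative, vanishes outside `S`, and is
realized by some power allocation `r ≤ 0` on `S`. -/
def polyTIN {K : ℕ} (L : Fin K → ℕ)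
    (α : (k : Fin K) → Fin (L k) → Fin K → ℝ)
    (π : (k : Fin K) → Equiv.Perm (Fin (L k)))
    (S : Set (User L))
    (d : (k : Fin K) → Fin (L k) → ℝ) : Prop :=
  (∀ (k : Fin K) (l : Fin (L k)), 0 ≤ d k l) ∧
  (∀ (k : Fin K) (l : Fin (L k)), (⟨k, l⟩ : User L) ∉ S → d k l = 0) ∧
  ∃ r : (k : Fin K) → Fin (L k) → ℝ,
    (∀ (k : Fin K) (l : Fin (L k)), (⟨k, l⟩ : User L) ∈ S → r k l ≤ 0) ∧
    (∀ (k : Fin K) (l : Fin (L k)), (⟨k, π k l⟩ : User L) ∈ S →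
      d k (π k l) ≤ r k (π k l) + α k (π k l) k - innerMax L α π S r k l)

/-- The TIN-achievable region `P*_π` for decoding order `π`: as `P_π(𝒦)` but with the
positive part `max(0, ·)` of the upper bound. -/
def starTIN {K : ℕ} (L : Fin K → ℕ)
    (α : (k : Fin K) → Fin (L k) → Fin K → ℝ)
    (π : (k : Fin K) → Equiv.Perm (Fin (L k)))
    (d : (k : Fin K) → Fin (L k) → ℝ) : Prop :=
  (∀ (k : Fin K) (l : Fin (L k)), 0 ≤ d k l) ∧
  ∃ r : (k : Fin K) → Fin (L k) → ℝ,
    (∀ (k : Fin K) (l : Fin (L k)), r k l ≤ 0) ∧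
    (∀ (k : Fin K) (l : Fin (L k)),
      d k (π k l) ≤ max 0 (r k (π k l) + α k (π k l) k - innerMax L α π Set.univ r k l))

/-- The TIN cyclic system of GDoF inequalities for decoding order `π`:
(i) per-cell MAC-type bounds, and (ii) cyclic bounds over sequences of distinct cells. -/
def cyclicSystem {K : ℕ} (L : Fin K → ℕ)
    (α : (k : Fin K) → Fin (L k) → Fin K → ℝ)
    (π : (k : Fin K) → Equiv.Perm (Fin (L k)))
    (d : (k : Fin K) → Fin (L k) → ℝ) : Prop :=
  (∀ (k : Fin K) (l : Fin (L k)),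
      ∑ s ∈ Finset.Iic l, d k (π k s) ≤ α k (π k l) k) ∧
  (∀ m : ℕ, 2 ≤ m → m ≤ K → ∀ c : Fin m → Fin K, Function.Injective c →
    ∀ lsel : (j : Fin m) → Fin (L (c j)),
      ∑ j, (∑ s ∈ Finset.Iic (lsel j), d (c j) (π (c j) s)) ≤
      ∑ j, (α (c j) (π (c j) (lsel j)) (c j) -
            α (c j) (π (c j) (lsel j)) (c (prevIdx j))))

section InnerMaxHelpers

variable {K : ℕ} {L : Fin K → ℕ}

private lemma innerSet_finite
    (α : (k : Fin K) → Fin (L k) → Fin K → ℝ)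
    (π : (k : Fin K) → Equiv.Perm (Fin (L k)))
    (S : Set (User L)) (r : (k : Fin K) → Fin (L k) → ℝ)
    (k : Fin K) (l : Fin (L k)) :
    (insert (0 : ℝ)
      ({x : ℝ | ∃ l' : Fin (L k), l' < l ∧ (⟨k, π k l'⟩ : User L) ∈ S ∧
          x = r k (π k l') + α k (π k l') k} ∪
       {x : ℝ | ∃ (j : Fin K) (lj : Fin (L j)), j ≠ k ∧ (⟨j, lj⟩ : User L) ∈ S ∧
          x = r j lj + α j lj k})).Finite := by
  apply Set.Finite.insert
  apply Set.Finite.union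
  · exact (Set.finite_range (fun l' : Fin (L k) => r k (π k l') + α k (π k l') k)).subset
      (by rintro x ⟨l', _, _, rfl⟩; exact ⟨l', rfl⟩)
  · exact (Set.finite_range (fun p : User L => r p.1 p.2 + α p.1 p.2 k)).subset
      (by rintro x ⟨j, lj, _, _, rfl⟩; exact ⟨⟨j, lj⟩, rfl⟩)

private lemma innerMax_nonneg
    (α : (k : Fin K) → Fin (L k) → Fin K → ℝ)
    (π : (k : Fin K) → Equiv.Perm (Fin (L k)))
    (S : Set (User L)) (r : (k : Fin K) → Fin (L k) → ℝ)
    (k : Fin K) (l : Fin (L k)) :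
    0 ≤ innerMax L α π S r k l :=
  le_csSup (innerSet_finite α π S r k l).bddAbove (Set.mem_insert _ _)

private lemma same_le_innerMax
    (α : (k : Fin K) → Fin (L k) → Fin K → ℝ)
    (π : (k : Fin K) → Equiv.Perm (Fin (L k)))
    (S : Set (User L)) (r : (k : Fin K) → Fin (L k) → ℝ)
    (k : Fin K) (l : Fin (L k)) (l' : Fin (L k)) (h1 : l' < l)
    (h2 : (⟨k, π k l'⟩ : User L) ∈ S) :
    r k (π k l') + α k (π k l') k ≤ innerMax L α π S r k l :=
  le_csSup (innerSet_finite α π S r k l).bddAbove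
    (Set.mem_insert_iff.mpr (Or.inr (Or.inl ⟨l', h1, h2, rfl⟩)))

private lemma cross_le_innerMax
    (α : (k : Fin K) → Fin (L k) → Fin K → ℝ)
    (π : (k : Fin K) → Equiv.Perm (Fin (L k)))
    (S : Set (User L)) (r : (k : Fin K) → Fin (L k) → ℝ)
    (k : Fin K) (l : Fin (L k)) (j : Fin K) (lj : Fin (L j)) (h1 : j ≠ k)
    (h2 : (⟨j, lj⟩ : User L) ∈ S) :
    r j lj + α j lj k ≤ innerMax L α π S r k l :=
  le_csSup (innerSet_finite α π S r k l).bddAbove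
    (Set.mem_insert_iff.mpr (Or.inr (Or.inr ⟨j, lj, h1, h2, rfl⟩)))

private lemma innerMax_le
    (α : (k : Fin K) → Fin (L k) → Fin K → ℝ)
    (π : (k : Fin K) → Equiv.Perm (Fin (L k)))
    (S : Set (User L)) (r : (k : Fin K) → Fin (L k) → ℝ)
    (k : Fin K) (l : Fin (L k)) (c : ℝ) (h0 : 0 ≤ c)
    (hA : ∀ l' : Fin (L k), l' < l → (⟨k, π k l'⟩ : User L) ∈ S →
      r k (π k l') + α k (π k l') k ≤ c)
    (hB : ∀ (j : Fin K) (lj : Fin (L j)), j ≠ k → (⟨j, lj⟩ : User L) ∈ S →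
      r j lj + α j lj k ≤ c) :
    innerMax L α π S r k l ≤ c := by
  apply csSup_le ⟨0, Set.mem_insert _ _⟩
  rintro x (rfl | (⟨l', h1, h2, rfl⟩ | ⟨j, lj, h1, h2, rfl⟩))
  · exact h0
  · exact hA l' h1 h2
  · exact hB j lj h1 h2

end InnerMaxHelpers

private lemma polyTIN_step {K : ℕ}
    (L : Fin K → ℕ) (hL : ∀ k, 1 ≤ L k)
    (α : (k : Fin K) → Fin (L k) → Fin K → ℝ)
    (hα : ∀ (k : Fin K) (l : Fin (L k)) (i : Fin K), 0 ≤ α k l i)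
    (hC2 : ∀ (i : Fin K) (li : Fin (L i)) (j : Fin K), j ≠ i →
      ∀ (k : Fin K), k ≠ i → ∀ (lk : Fin (L k)),
      α i li j + α k lk i - (if k = j then 0 else α k lk j) ≤ α i li i)
    (M : Set (Fin K)) (k : Fin K) :
    {d : (k : Fin K) → Fin (L k) → ℝ |
        polyTIN L α (idOrder L) {u : User L | u.1 ∈ M} d} ⊆
    {d : (k : Fin K) → Fin (L k) → ℝ |
        polyTIN L α (idOrder L) {u : User L | u.1 ∈ insert k M} d} := by
  classical
  intro d hd
  simp only [Set.mem_setOf_eq] at hd ⊢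
  by_cases hkM : k ∈ M
  · rwa [Set.insert_eq_self.mpr hkM]
  obtain ⟨hd0, hdz, r, hr0, hrc⟩ := hd
  simp only [idOrder, Equiv.refl_apply] at hrc
  -- the new power level for cell k
  set f : User L → ℝ := fun u => if u.1 ∈ M then r u.1 u.2 + α u.1 u.2 k else 0 with hf
  have hne : (Finset.univ : Finset (User L)).Nonempty := ⟨⟨k, ⟨0, hL k⟩⟩, Finset.mem_univ _⟩
  set B : ℝ := Finset.univ.sup' hne f with hBdef
  have hB0 : 0 ≤ B := by
    have h := Finset.le_sup' f (Finset.mem_univ (⟨k, ⟨0, hL k⟩⟩ : User L))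
    have hfu : f (⟨k, ⟨0, hL k⟩⟩ : User L) = 0 := by simp [hf, hkM]
    rw [hfu, ← hBdef] at h
    exact h
  have hfle : ∀ (u : User L) (l : Fin (L k)), f u ≤ α k l k := by
    intro u l
    by_cases hu : u.1 ∈ M
    · have hjk : u.1 ≠ k := fun h => hkM (h ▸ hu)
      have h2 := hC2 k l u.1 hjk u.1 hjk u.2
      rw [if_pos rfl] at h2
      have h3 := hα k l u.1
      have h4 : r u.1 u.2 ≤ 0 := hr0 u.1 u.2 hu
      simp only [hf, if_pos hu]
      linarith
    · simp only [hf, if_neg hu]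
      exact hα k l k
  have hBle : ∀ l : Fin (L k), B ≤ α k l k := by
    intro l
    rw [hBdef]
    exact Finset.sup'_le hne f (fun u _ => hfle u l)
  set r' : (j : Fin K) → Fin (L j) → ℝ :=
    fun j lj => if h : j = k then B - α j lj j else r j lj with hr'
  have hr'k : ∀ lj : Fin (L k), r' k lj = B - α k lj k := fun lj => dif_pos rfl
  have hr'ne : ∀ (j : Fin K) (lj : Fin (L j)), j ≠ k → r' j lj = r j lj :=
    fun j lj h => dif_neg h
  have hfB : ∀ (j : Fin K) (lj : Fin (L j)), j ∈ M → r j lj + α j lj k ≤ B := by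
    intro j lj hjM
    have h := Finset.le_sup' f (Finset.mem_univ (⟨j, lj⟩ : User L))
    rw [← hBdef] at h
    simpa [hf, if_pos hjM] using h
  refine ⟨hd0, ?_, r', ?_, ?_⟩
  · intro k' l hmem
    simp only [Set.mem_setOf_eq, Set.mem_insert_iff] at hmem
    exact hdz k' l (fun hM => hmem (Or.inr hM))
  · intro k' l hmem
    simp only [Set.mem_setOf_eq, Set.mem_insert_iff] at hmem
    by_cases hk' : k' = k
    · subst hk'
      rw [hr'k l]
      linarith [hBle l]
    · rw [hr'ne k' l hk']
      exact hr0 k' l (hmem.resolve_left hk')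
  · intro k' l hmem
    simp only [idOrder, Equiv.refl_apply] at hmem ⊢
    by_cases hk' : k' = k
    · -- the new cell: d vanishes there, constraint reduces to innerMax ≤ B
      subst hk'
      have hdl : d k' l = 0 := hdz k' l hkM
      rw [hdl, hr'k l]
      have hIle : innerMax L α (idOrder L) {u : User L | u.1 ∈ insert k' M} r' k' l ≤ B := by
        apply innerMax_le _ _ _ _ _ _ _ hB0
        · intro l' _ _
          simp only [idOrder, Equiv.refl_apply]
          rw [hr'k l']
          linarith
        · intro j lj hj hS
          rw [hr'ne j lj hj]
          have hjM : j ∈ M := by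
            simp only [Set.mem_setOf_eq, Set.mem_insert_iff] at hS
            exact hS.resolve_left hj
          exact hfB j lj hjM
      linarith
    · -- an old cell: the old constraint, plus C2, absorbs the new interference
      have hk'M : k' ∈ M := hmem.resolve_left hk'
      have hold := hrc k' l hk'M
      set I := innerMax L α (idOrder L) {u : User L | u.1 ∈ M} r k' l with hI
      have hI0 : 0 ≤ I := innerMax_nonneg _ _ _ _ _ _
      set Q : ℝ := r k' l + α k' l k' - d k' l with hQ
      have hIQ : I ≤ Q := by simp only [hQ]; linarith
      have hQ0 : 0 ≤ Q := le_trans hI0 hIQ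
      rw [hr'ne k' l hk']
      have hIle : innerMax L α (idOrder L) {u : User L | u.1 ∈ insert k M} r' k' l ≤ Q := by
        apply innerMax_le _ _ _ _ _ _ _ hQ0
        · intro l'' hlt _
          simp only [idOrder, Equiv.refl_apply]
          rw [hr'ne k' l'' hk']
          calc r k' l'' + α k' l'' k'
              ≤ I := same_le_innerMax α (idOrder L) _ r k' l l'' hlt hk'M
            _ ≤ Q := hIQ
        · intro j lj hj hS
          by_cases hjk : j = k
          · subst hjk
            rw [hr'k lj]
            have hk'j : k' ≠ j := hk'
            -- need : B - α j lj j + α j lj k' ≤ Q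
            have hkey : B ≤ Q + α j lj j - α j lj k' := by
              rw [hBdef]
              apply Finset.sup'_le hne f
              rintro ⟨j', lj'⟩ -
              by_cases huM : j' ∈ M
              · have hj'j : j' ≠ j := fun h => hkM (h ▸ huM)
                have h4 : r j' lj' ≤ 0 := hr0 j' lj' huM
                have h2 := hC2 j lj k' hk'j j' hj'j lj'
                by_cases hj'k' : j' = k'
                · rw [if_pos hj'k'] at h2
                  simp only [hf, if_pos huM]
                  linarith
                · rw [if_neg hj'k'] at h2
                  have h5 : r j' lj' + α j' lj' k' ≤ I :=
                    cross_le_innerMax α (idOrder L) _ r k' l j' lj' hj'k' huM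
                  simp only [hf, if_pos huM]
                  linarith
              · have h2 := hC2 j lj k' hk'j k' hk'j ⟨0, hL k'⟩
                rw [if_pos rfl] at h2
                have h3 := hα k' ⟨0, hL k'⟩ j
                simp only [hf, if_neg huM]
                linarith
            linarith
          · rw [hr'ne j lj hjk]
            have hjM : j ∈ M := by
              simp only [Set.mem_setOf_eq, Set.mem_insert_iff] at hS
              exact hS.resolve_left hjk
            calc r j lj + α j lj k'
                ≤ I := cross_le_innerMax α (idOrder L) _ r k' l j lj hj hjM
              _ ≤ Q := hIQ
      linarith

/-- **Step 3 of the convexity proof (monotonicity in the set of active cells).**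
Assume (C2). Adding a full cell to a union of full cells can only enlarge the polyhedral
TIN region under the identity decoding order:
`P_id(∪_{i∈M} K_i) ⊆ P_id(∪_{i∈M∪{k}} K_i)` for every `M` and `k`; consequently
`P_id(∪_{i∈M} K_i) ⊆ P_id(𝒦)` for every `M`. -/
theorem polyTIN_id_cells_monotone {K : ℕ} (hK : 1 ≤ K)
    (L : Fin K → ℕ) (hL : ∀ k, 1 ≤ L k)
    (α : (k : Fin K) → Fin (L k) → Fin K → ℝ)
    (hα : ∀ (k : Fin K) (l : Fin (L k)) (i : Fin K), 0 ≤ α k l i)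
    (hmono : ∀ k : Fin K, Monotone (fun l : Fin (L k) => α k l k))
    (hC2 : ∀ (i : Fin K) (li : Fin (L i)) (j : Fin K), j ≠ i →
      ∀ (k : Fin K), k ≠ i → ∀ (lk : Fin (L k)),
      α i li j + α k lk i - (if k = j then 0 else α k lk j) ≤ α i li i) :
    (∀ (M : Set (Fin K)) (k : Fin K),
      {d : (k : Fin K) → Fin (L k) → ℝ |
          polyTIN L α (idOrder L) {u : User L | u.1 ∈ M} d} ⊆
      {d : (k : Fin K) → Fin (L k) → ℝ |
          polyTIN L α (idOrder L) {u : User L | u.1 ∈ insert k M} d}) ∧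
    (∀ M : Set (Fin K),
      {d : (k : Fin K) → Fin (L k) → ℝ |
          polyTIN L α (idOrder L) {u : User L | u.1 ∈ M} d} ⊆
      {d : (k : Fin K) → Fin (L k) → ℝ |
          polyTIN L α (idOrder L) Set.univ d}) := by
  refine ⟨polyTIN_step L hL α hα hC2, ?_⟩
  intro M
  have key : ∀ F : Finset (Fin K),
      {d : (k : Fin K) → Fin (L k) → ℝ |
          polyTIN L α (idOrder L) {u : User L | u.1 ∈ M} d} ⊆
      {d : (k : Fin K) → Fin (L k) → ℝ |
          polyTIN L α (idOrder L) {u : User L | u.1 ∈ M ∪ ↑F} d} := by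
    intro F
    induction F using Finset.induction with
    | empty => intro d hd; simpa using hd
    | insert a F ha ih =>
      have hrw : M ∪ ↑(insert a F) = insert a (M ∪ ↑F) := by
        rw [Finset.coe_insert, Set.union_insert]
      rw [hrw]
      exact ih.trans (polyTIN_step L hL α hα hC2 (M ∪ ↑F) a)
  have key2 := key Finset.univ
  have hrw : M ∪ ↑(Finset.univ : Finset (Fin K)) = Set.univ := by simp
  rw [hrw] at key2
  have hrw2 : {u : User L | u.1 ∈ (Set.univ : Set (Fin K))} = Set.univ := by simp
  rw [hrw2] at key2
  exact key2
end

section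
/- Assume the TIN-optimality condition (O1). Fix cells i ≠ j and l_i ∈ {1,…,L_i}, and partition {1,…,l_i} into ⟨l_i⟩''_j = {s ∈ {1,…,l_i−1} : α_{ii}^{[l_i]} − α_{ij}^{[l_i]} ≥ α_{ii}^{[s]}} and ⟨l_i⟩'_j = {1,…,l_i} \ ⟨l_i⟩''_j. Then for all s', l' ∈ ⟨l_i⟩'_j \ {l_i} with s' < l': α_{ii}^{[l_i]} − α_{ij}^{[l_i]} ≥ α_{ii}^{[s']} − α_{ij}^{[s']} + α_{ij}^{[l']}. -/
/-- **Lemma 5 of the paper (Section 6, partition inequality).**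
Assume (O1) and fix cells `i ≠ j` and `l_i`. Partition `{1,…,l_i}` into the weak group
`⟨l_i⟩''_j = {s < l_i : α_{ii}^{[l_i]} − α_{ij}^{[l_i]} ≥ α_{ii}^{[s]}}` and its
complement `⟨l_i⟩'_j`. Then for all `s' < l'` in `⟨l_i⟩'_j \ {l_i}` (membership being
expressed by `s' < l_i`, `l' < l_i` and the strict inequalities below):
`α_{ii}^{[l_i]} − α_{ij}^{[l_i]} ≥ α_{ii}^{[s']} − α_{ij}^{[s']} + α_{ij}^{[l']}`. -/
theorem partition_inequality {K : ℕ} (hK : 2 ≤ K)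
    (L : Fin K → ℕ) (hL : ∀ k, 1 ≤ L k)
    (α : (k : Fin K) → Fin (L k) → Fin K → ℝ)
    (hα : ∀ (k : Fin K) (l : Fin (L k)) (i : Fin K), 0 ≤ α k l i)
    (hmono : ∀ k : Fin K, Monotone (fun l : Fin (L k) => α k l k))
    (hO1 : ∀ (i j : Fin K), j ≠ i → ∀ (l' l : Fin (L i)), l' < l →
      α i l' i + min (α i l j) (2 * α i l j - α i l' j) ≤ α i l i)
    (i j : Fin K) (hij : i ≠ j)
    (li s' l' : Fin (L i))
    (hsl : s' < l') (hlli : l' < li)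
    (hs'mem : α i li i - α i li j < α i s' i)
    (hl'mem : α i li i - α i li j < α i l' i) :
    α i s' i - α i s' j + α i l' j ≤ α i li i - α i li j := by
  have hji : j ≠ i := Ne.symm hij
  have h1 := hO1 i j hji s' li (hsl.trans hlli)
  have h2 := hO1 i j hji l' li hlli
  have h3 := hO1 i j hji s' l' hsl
  have n1 := hα i li j
  rcases min_cases (α i li j) (2 * α i li j - α i s' j) with ⟨e,_⟩|⟨e,_⟩ <;>
  rcases min_cases (α i li j) (2 * α i li j - α i l' j) with ⟨f,_⟩|⟨f,_⟩ <;>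
  rcases min_cases (α i l' j) (2 * α i l' j - α i s' j) with ⟨g,_⟩|⟨g,_⟩ <;>
  rw [e] at h1 <;> rw [f] at h2 <;> rw [g] at h3 <;> linarith
end

section
/- Assume the TIN-optimality condition (O1). Fix cells i ≠ j and l_i ∈ {1,…,L_i}, and partition {1,…,l_i} into ⟨l_i⟩''_j = {s ∈ {1,…,l_i−1} : α_{ii}^{[l_i]} − α_{ij}^{[l_i]} ≥ α_{ii}^{[s]}} and ⟨l_i⟩'_j = {1,…,l_i} \ ⟨l_i⟩''_j. Then for all s', l' ∈ ⟨l_i⟩'_j with s' < l': α_{ii}^{[l']} − α_{ij}^{[l']} ≥ α_{ii}^{[s']} − α_{ij}^{[s']} + α_{ij}^{[l']}. -/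
/-- **Equation (102) in the proof of Lemma 5 of the paper (generalized partition
inequality).** Assume (O1) and fix cells `i ≠ j` and `l_i`. Partition `{1,…,l_i}` into
the weak group `⟨l_i⟩''_j = {s < l_i : α_{ii}^{[l_i]} − α_{ij}^{[l_i]} ≥ α_{ii}^{[s]}}`
and its complement `⟨l_i⟩'_j` (which contains `l_i`). Then for all `s' < l'` both in
`⟨l_i⟩'_j`: `α_{ii}^{[l']} − α_{ij}^{[l']} ≥ α_{ii}^{[s']} − α_{ij}^{[s']} + α_{ij}^{[l']}`. -/
theorem partition_inequality_general {K : ℕ} (hK : 2 ≤ K)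
    (L : Fin K → ℕ) (hL : ∀ k, 1 ≤ L k)
    (α : (k : Fin K) → Fin (L k) → Fin K → ℝ)
    (hα : ∀ (k : Fin K) (l : Fin (L k)) (i : Fin K), 0 ≤ α k l i)
    (hmono : ∀ k : Fin K, Monotone (fun l : Fin (L k) => α k l k))
    (hO1 : ∀ (i j : Fin K), j ≠ i → ∀ (l' l : Fin (L i)), l' < l →
      α i l' i + min (α i l j) (2 * α i l j - α i l' j) ≤ α i l i)
    (i j : Fin K) (hij : i ≠ j)
    (li s' l' : Fin (L i))
    (hsl : s' < l') (hlli : l' ≤ li)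
    (hs'mem : α i li i - α i li j < α i s' i)
    (hl'mem : l' = li ∨ α i li i - α i li j < α i l' i) :
    α i s' i - α i s' j + α i l' j ≤ α i l' i - α i l' j := by
  by_cases hcase : l' = li
  · subst hcase
    have h1 := hO1 i j hij.symm s' l' hsl
    rcases min_cases (α i l' j) (2 * α i l' j - α i s' j) with ⟨he, _⟩ | ⟨he, _⟩
    · rw [he] at h1; linarith
    · rw [he] at h1; linarith
  · have hl'm : α i li i - α i li j < α i l' i := hl'mem.resolve_left hcase
    have hl'lt : l' < li := lt_of_le_of_ne hlli hcase
    have h1 := hO1 i j hij.symm s' l' hsl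
    have h2 := hO1 i j hij.symm l' li hl'lt
    have hC : α i l' i + (2 * α i li j - α i l' j) ≤ α i li i := by
      rcases min_cases (α i li j) (2 * α i li j - α i l' j) with ⟨he, _⟩ | ⟨he, _⟩
      · rw [he] at h2; linarith
      · rw [he] at h2; linarith
    have hpos := hα i li j
    rcases min_cases (α i l' j) (2 * α i l' j - α i s' j) with ⟨he, _⟩ | ⟨he, _⟩
    · rw [he] at h1; linarith
    · rw [he] at h1; linarith
end
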